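/- Immersion monotonicity of edge-admissibility: if H is an immersion of G, then δ_e^∞(H) ≤ δ_e^∞(G). -/

import Mathlib

/-- A walk in a multigraph given by its endpoint function `ends`:
`IsWalk ends u w l` means `l` is the list of edges of a walk from `u` to `w`. -/
inductive IsWalk {V E : Type*} (ends : E → Sym2 V) : V → V → List E → Prop
  | nil (v : V) : IsWalk ends v v []
  | cons {u v w : V} {e : E} {l : List E} :
      ends e = s(u, v) → IsWalk ends v w l → IsWalk ends u w (e :: l)

/-- `EdgeSep ends s x S A` : the edge set `A` meets every walk of length at most `s`
from `x` to a vertex of `S`. -/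
def EdgeSep {V E : Type*} (ends : E → Sym2 V) (s : ℕ∞) (x : V) (S : Set V) (A : Set E) : Prop :=
  ∀ y ∈ S, ∀ l : List E, IsWalk ends x y l → (l.length : ℕ∞) ≤ s → ∃ e ∈ l, e ∈ A

/-- A `(k,s)`-edge-hide-out: every edge set separating a vertex `x ∈ R` from `R \ {x}`
(at distance `s`) has at least `k` edges. -/
def IsHideout {V E : Type*} (ends : E → Sym2 V) (s : ℕ∞) (k : ℕ) (R : Set V) : Prop :=
  ∀ x ∈ R, ∀ A : Set E, EdgeSep ends s x (R \ {x}) A → k ≤ A.ncard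

/-- `G` admits a layout of `s`-edge-degeneracy at most `k`. -/
def LayoutWidthLE {V E : Type*} (ends : E → Sym2 V) (s : ℕ∞) (k : ℕ) : Prop :=
  ∃ (n : ℕ) (L : Fin n ≃ V), ∀ i : Fin n,
    ∃ A : Set E, A.ncard ≤ k ∧ EdgeSep ends s (L i) {v | ∃ j, j < i ∧ L j = v} A

/-- The `s`-edge-degeneracy `δ_e^s(G)`. -/
noncomputable def edgeDeg {V E : Type*} (ends : E → Sym2 V) (s : ℕ∞) : ℕ :=
  sInf {k | LayoutWidthLE ends s k}

/-- The edge-degree of a vertex (parallel edges counted with multiplicity). -/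
noncomputable def degE {V E : Type*} (ends : E → Sym2 V) (v : V) : ℕ :=
  {e : E | v ∈ ends e}.ncard
/-- The multigraph `θ_k`: two vertices joined by `k` parallel edges. -/
def thetaEnds (k : ℕ) : Fin k → Sym2 (Fin 2) := fun _ => s(0, 1)

/-- `H` is an immersion of `G`: an injection of the vertices of `H` into those of `G`
together with pairwise edge-disjoint trails of `G` realizing the edges of `H`. -/
def Immersion {V' E' V E : Type*} (ends' : E' → Sym2 V') (ends : E → Sym2 V) : Prop :=
  ∃ (φ : V' ↪ V) (P : E' → List E),
    (∀ e : E', ∃ u v : V', ends' e = s(u, v) ∧ IsWalk ends (φ u) (φ v) (P e) ∧ (P e).Nodup) ∧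
    ∀ e f : E', e ≠ f → ∀ x ∈ P e, x ∉ P f

/-- immersion monotonicity of `∞`-edge-admissibility:
if `H` is an immersion of `G` then `δ_e^∞(H) ≤ δ_e^∞(G)`. -/
theorem IsWalk.append' {V E : Type*} {ends : E → Sym2 V} {u v w : V} {l1 l2 : List E}
    (h1 : IsWalk ends u v l1) (h2 : IsWalk ends v w l2) : IsWalk ends u w (l1 ++ l2) := by
  induction h1 with
  | nil => exact h2
  | cons he _ ih => exact IsWalk.cons he (ih h2)

theorem IsWalk.reverse' {V E : Type*} {ends : E → Sym2 V} {u v : V} {l : List E}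
    (h : IsWalk ends u v l) : IsWalk ends v u l.reverse := by
  induction h with
  | nil v => exact .nil v
  | @cons u m w e l he _ ih =>
    rw [List.reverse_cons]
    exact ih.append' (.cons (he.trans Sym2.eq_swap) (.nil _))

theorem lift_walk {V' E' V E : Type*} {ends' : E' → Sym2 V'} {ends : E → Sym2 V} {φ : V' → V}
    {P : E' → List E}
    (hP : ∀ e : E', ∃ u v : V', ends' e = s(u, v) ∧ IsWalk ends (φ u) (φ v) (P e))
    {u' v' : V'} {l' : List E'} (h : IsWalk ends' u' v' l') :
    ∃ lG : List E, IsWalk ends (φ u') (φ v') lG ∧ ∀ a ∈ lG, ∃ e' ∈ l', a ∈ P e' := by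
  induction h with
  | nil v => exact ⟨[], .nil _, by simp⟩
  | @cons u v w e l he _ ih =>
    obtain ⟨lG, hw, hmem⟩ := ih
    obtain ⟨u0, v0, he0, hw0⟩ := hP e
    rcases Sym2.eq_iff.mp (he.symm.trans he0) with ⟨h1, h2⟩ | ⟨h1, h2⟩
    · subst h1; subst h2
      refine ⟨P e ++ lG, hw0.append' hw, ?_⟩
      intro a ha
      rcases List.mem_append.mp ha with ha | ha
      · exact ⟨e, by simp, ha⟩
      · obtain ⟨e', he', hae'⟩ := hmem a ha
        exact ⟨e', by simp [he'], hae'⟩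
    · subst h1; subst h2
      refine ⟨(P e).reverse ++ lG, hw0.reverse'.append' hw, ?_⟩
      intro a ha
      rcases List.mem_append.mp ha with ha | ha
      · exact ⟨e, by simp, List.mem_reverse.mp ha⟩
      · obtain ⟨e', he', hae'⟩ := hmem a ha
        exact ⟨e', by simp [he'], hae'⟩

theorem layout_trans {V' E' V E : Type*} [Finite V'] [Finite E'] [Finite V] [Finite E]
    {ends' : E' → Sym2 V'} {ends : E → Sym2 V}
    (him : Immersion ends' ends) (k : ℕ) (h : LayoutWidthLE ends ⊤ k) :
    LayoutWidthLE ends' ⊤ k := by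
  classical
  obtain ⟨φ, P, hP, hdisj⟩ := him
  obtain ⟨n, L, hL⟩ := h
  have hP' : ∀ e : E', ∃ u v : V', ends' e = s(u, v) ∧ IsWalk ends (φ u) (φ v) (P e) := by
    intro e; obtain ⟨u, v, h1, h2, _⟩ := hP e; exact ⟨u, v, h1, h2⟩
  set f : V' → Fin n := fun x => L.symm (φ x) with hf
  have hfinj : Function.Injective f := fun a b hab => φ.injective (L.symm.injective hab)
  letI : LinearOrder V' := LinearOrder.lift' f hfinj
  have hflt : ∀ a b : V', a < b → f a < f b := by
    intro a b hab
    rw [lt_iff_le_not_ge] at hab ⊢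
    exact hab
  letI : Fintype V' := Fintype.ofFinite V'
  set L' := monoEquivOfFin V' rfl with hL'
  refine ⟨Fintype.card V', L'.toEquiv, ?_⟩
  intro i'
  set x' : V' := L' i' with hx'
  have hLfx : ∀ z : V', L (f z) = φ z := fun z => L.apply_symm_apply (φ z)
  obtain ⟨A, hAcard, hAsep⟩ := hL (f x')
  refine ⟨{e' | ∃ a ∈ A, a ∈ P e'}, ?_, ?_⟩
  · -- cardinality bound
    refine le_trans ?_ hAcard
    rcases Set.eq_empty_or_nonempty {e' | ∃ a ∈ A, a ∈ P e'} with h0 | ⟨e0, he0⟩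
    · simp [h0]
    · obtain ⟨a0, _, _⟩ := he0
      haveI : Nonempty E := ⟨a0⟩
      refine Set.ncard_le_ncard_of_injOn
        (fun e' => if h : ∃ a ∈ A, a ∈ P e' then h.choose else Classical.arbitrary E)
        ?_ ?_ (Set.toFinite A)
      · intro e' he'
        simp only [Set.mem_setOf_eq] at he'
        simp only [dif_pos he']
        exact he'.choose_spec.1
      · intro e' he' f' hf' heq
        simp only [Set.mem_setOf_eq] at he' hf'
        by_contra hne
        simp only [dif_pos he', dif_pos hf'] at heq
        have h2 := hf'.choose_spec.2
        rw [← heq] at h2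
        exact hdisj e' f' hne _ he'.choose_spec.2 h2
  · -- separation
    intro y hy l' hwalk _
    obtain ⟨j', hj', rfl⟩ := hy
    obtain ⟨lG, hwG, hmem⟩ := lift_walk hP' hwalk
    have hyv : φ (L'.toEquiv j') ∈ {v | ∃ j, j < f x' ∧ L j = v} := by
      refine ⟨f (L'.toEquiv j'), hflt _ _ (L'.strictMono hj'), hLfx _⟩
    have hwG' : IsWalk ends (L (f x')) (φ (L'.toEquiv j')) lG := by
      rw [hLfx]; exact hwG
    obtain ⟨a, haL, haA⟩ := hAsep _ hyv lG hwG' le_top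
    obtain ⟨e', he'l, hae'⟩ := hmem a haL
    exact ⟨e', he'l, a, haA, hae'⟩

theorem layout_exists {V E : Type*} [Finite V] [Finite E] (ends : E → Sym2 V) :
    {k | LayoutWidthLE ends ⊤ k}.Nonempty := by
  classical
  haveI := Fintype.ofFinite V
  refine ⟨(Set.univ : Set E).ncard, Fintype.card V, (Fintype.equivFin V).symm, ?_⟩
  intro i
  refine ⟨Set.univ, le_rfl, ?_⟩
  intro y hy l hw _
  cases hw with
  | nil =>
    obtain ⟨j, hj, hjy⟩ := hy
    exact absurd ((Fintype.equivFin V).symm.injective hjy) (Fin.ne_of_lt hj)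
  | cons he hw' => exact ⟨_, List.mem_cons_self, trivial⟩


theorem edgeDeg_mono_immersion {V' E' V E : Type*} [Finite V'] [Finite E'] [Finite V] [Finite E]
    (ends' : E' → Sym2 V') (ends : E → Sym2 V)
    (hl' : ∀ e, ¬ (ends' e).IsDiag) (hl : ∀ e, ¬ (ends e).IsDiag)
    (him : Immersion ends' ends) :
    edgeDeg ends' ⊤ ≤ edgeDeg ends ⊤ := by
  exact Nat.sInf_le (layout_trans him _ (Nat.sInf_mem (layout_exists ends)))
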